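/- Let G_T be a G-system at t₀ and G_t ∈ G_T with J := G_t ∩ G_{t₀}. If G_t is reachable from G_{t₀} by a finite sequence of mutations, then there exists a sequence of mutations (μ_{g'₁},…,μ_{g'_m}) with each g'ⱼ ∉ J such that G_t = μ_{g'_m} ∘ ⋯ ∘ μ_{g'₁}(G_{t₀}); i.e., one can pass from G_{t₀} to G_t never mutating at a common vector of G_t and G_{t₀}. -/

import Mathlib

/-- A `G`-system at `t₀` (Definition 5.1.1): a collection of ℤ-bases of ℤⁿ, indexed by `T`,
satisfying the Mutation Condition, the Co-Bongartz Completion Condition and the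
Uniqueness Condition. -/
structure GSystem (n : ℕ) (T : Type) (t₀ : T) where
  g : T → Fin n → (Fin n → ℤ)
  indep : ∀ t, LinearIndependent ℤ (g t)
  span : ∀ t, Submodule.span ℤ (Set.range (g t)) = ⊤
  mutation : ∀ (t : T) (k : Fin n), ∃ t₁ : T,
    Set.range (g t) ∩ Set.range (g t₁) = Set.range (g t) \ {g t k}
  coBongartz : ∀ (t : T) (J : Set (Fin n → ℤ)), J ⊆ Set.range (g t₀) →
    ∃ t' : T, J ⊆ Set.range (g t') ∧
      ∀ (k : Fin n) (r : Fin n → ℤ), g t k = ∑ i, r i • g t' i →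
        ∀ i, g t' i ∉ J → 0 ≤ r i
  uniqueness : ∀ (u v : T) (I I' : Finset (Fin n)) (r r' : Fin n → ℤ),
    (∀ i ∈ I, 0 < r i) → (∀ j ∈ I', 0 < r' j) →
    (∑ i ∈ I, r i • g u i) = (∑ j ∈ I', r' j • g v j) →
    ∃ σ : Fin n → Fin n, Set.BijOn σ ↑I' ↑I ∧
      ∀ j ∈ I', r' j = r (σ j) ∧ g v j = g u (σ j)

/-- `G_{t'}` is a co-Bongartz completion of `J` with respect to `G_t`
(conditions (a) and (b) of Proposition-Definition 5.1.4). -/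
def GSystem.IsCoB {n : ℕ} {T : Type} {t₀ : T} (S : GSystem n T t₀)
    (J : Set (Fin n → ℤ)) (t t' : T) : Prop :=
  J ⊆ Set.range (S.g t') ∧
  ∀ (k : Fin n) (r : Fin n → ℤ), S.g t k = ∑ i, r i • S.g t' i →
    ∀ i, S.g t' i ∉ J → 0 ≤ r i

/-- `G_{t'}` is the mutation of `G_t` at `g_{k;t}`, i.e.
`G_t ∩ G_{t'} = G_t \ {g_{k;t}}` (Proposition-Definition 5.1.3). -/
def GSystem.IsMutationAt {n : ℕ} {T : Type} {t₀ : T} (S : GSystem n T t₀)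
    (t t' : T) (k : Fin n) : Prop :=
  Set.range (S.g t) ∩ Set.range (S.g t') = Set.range (S.g t) \ {S.g t k}

/-- A single step between bases of the `G`-system: either they are equal as
sets (identified bases) or one is a mutation of the other. -/
def GSystem.Step {n : ℕ} {T : Type} {t₀ : T} (S : GSystem n T t₀) (a b : T) : Prop :=
  Set.range (S.g a) = Set.range (S.g b) ∨ ∃ k : Fin n, S.IsMutationAt a b k

namespace GSystem

open scoped Classical

variable {n : ℕ} {T : Type} {t₀ : T} (S : GSystem n T t₀)

lemma g_injective (u : T) : Function.Injective (S.g u) :=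
  (S.indep u).injective

/-- The basis of `ℤⁿ` determined by `G_u`. -/
noncomputable def basis (u : T) : Module.Basis (Fin n) ℤ (Fin n → ℤ) :=
  Module.Basis.mk (S.indep u) (S.span u).ge

lemma basis_apply (u : T) (i : Fin n) : S.basis u i = S.g u i :=
  Module.Basis.mk_apply _ _ _

lemma sum_repr (u : T) (v : Fin n → ℤ) :
    ∑ i, (S.basis u).repr v i • S.g u i = v := by
  conv_rhs => rw [← (S.basis u).sum_repr v]
  exact Finset.sum_congr rfl fun i _ => by rw [S.basis_apply]

lemma ncard_range (u : T) : (Set.range (S.g u)).ncard = n := by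
  rw [← Set.image_univ, Set.ncard_image_of_injective _ (S.g_injective u),
    Set.ncard_univ, Nat.card_eq_fintype_card, Fintype.card_fin]

lemma range_eq_of_subset {u u' : T}
    (h : Set.range (S.g u) ⊆ Set.range (S.g u')) :
    Set.range (S.g u) = Set.range (S.g u') :=
  Set.eq_of_subset_of_ncard_le h
    (by rw [S.ncard_range, S.ncard_range]) (Set.finite_range _)

lemma isCoB_self {J : Set (Fin n → ℤ)} {s : T} (h : J ⊆ Set.range (S.g s)) :
    S.IsCoB J s s := by
  refine ⟨h, fun k r hr i hi => ?_⟩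
  have h0 : ∑ j, (r j - if j = k then 1 else 0) • S.g s j = 0 := by
    have hk : ∑ j, (if j = k then (1 : ℤ) else 0) • S.g s j = S.g s k := by
      rw [Finset.sum_eq_single k]
      · simp
      · intro b _ hb; simp [hb]
      · intro hk; exact absurd (Finset.mem_univ k) hk
    simp only [sub_smul, Finset.sum_sub_distrib, hk, ← hr]
    simp
  have := Fintype.linearIndependent_iff.1 (S.indep s) _ h0 i
  have hri : r i = if i = k then 1 else 0 := by linarith [sub_eq_zero.1 (by linarith [this] : r i - (if i = k then 1 else 0) = 0)]
  rw [hri]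
  split <;> norm_num

lemma sum_filter_mem (u : T) {J : Set (Fin n → ℤ)} (hJ : J ⊆ Set.range (S.g u))
    (hfin : J.Finite) :
    ∑ i ∈ Finset.univ.filter (fun i => S.g u i ∈ J), S.g u i
      = ∑ x ∈ hfin.toFinset, x := by
  classical
  refine Finset.sum_bij (fun i _ => S.g u i) ?_ ?_ ?_ ?_
  · intro a ha
    simp only [Finset.mem_filter, Finset.mem_univ, true_and] at ha
    exact hfin.mem_toFinset.2 ha
  · intro a₁ _ a₂ _ h
    exact S.g_injective u h
  · intro x hx
    have hx' := hfin.mem_toFinset.1 hx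
    obtain ⟨i, hi⟩ := hJ hx'
    refine ⟨i, ?_, hi⟩
    simp only [Finset.mem_filter, Finset.mem_univ, true_and, hi]
    exact hx'
  · intros; rfl

/-- The "exchange" claim: if a vector `v` belongs both to `G_s` and `G_{s'}`, and `u`, `u'`
are co-Bongartz completions of `J` with respect to `s`, `s'` respectively, then every
basis vector of `u` outside `J` occurring in the `u`-expansion of `v` is also a basis
vector of `u'`.  Proved using the Uniqueness Condition after adding a large multiple of
the sum of the vectors of `J` to `v`. -/
lemma claim {J : Set (Fin n → ℤ)} {s s' u u' : T}
    (hu : S.IsCoB J s u) (hu' : S.IsCoB J s' u')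
    {v : Fin n → ℤ} (hv : v ∈ Set.range (S.g s)) (hv' : v ∈ Set.range (S.g s'))
    {a b : Fin n → ℤ} (ha : v = ∑ i, a i • S.g u i) (hb : v = ∑ i, b i • S.g u' i) :
    ∀ i, a i ≠ 0 → S.g u i ∉ J → S.g u i ∈ Set.range (S.g u') := by
  classical
  obtain ⟨k, hk⟩ := hv
  obtain ⟨k', hk'⟩ := hv'
  have hsgn : ∀ i, S.g u i ∉ J → 0 ≤ a i := hu.2 k a (hk.trans ha)
  have hsgn' : ∀ i, S.g u' i ∉ J → 0 ≤ b i := hu'.2 k' b (hk'.trans hb)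
  have hJfin : J.Finite := (Set.finite_range (S.g u)).subset hu.1
  set N : ℤ := 1 + ∑ i, (|a i| + |b i|) with hN
  have habs : ∀ i, |a i| < N ∧ |b i| < N := by
    intro i
    have h1 : |a i| + |b i| ≤ ∑ j, (|a j| + |b j|) :=
      Finset.single_le_sum (f := fun j => |a j| + |b j|)
        (fun j _ => add_nonneg (abs_nonneg _) (abs_nonneg _)) (Finset.mem_univ i)
    have h2 := abs_nonneg (a i)
    have h3 := abs_nonneg (b i)
    constructor <;> (rw [hN]; linarith)
  set r : Fin n → ℤ := fun i => a i + if S.g u i ∈ J then N else 0 with hrdef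
  set r' : Fin n → ℤ := fun i => b i + if S.g u' i ∈ J then N else 0 with hr'def
  set I : Finset (Fin n) := Finset.univ.filter (fun i => S.g u i ∈ J ∨ a i ≠ 0) with hIdef
  set I' : Finset (Fin n) := Finset.univ.filter (fun i => S.g u' i ∈ J ∨ b i ≠ 0) with hI'def
  have hpos : ∀ i ∈ I, 0 < r i := by
    intro i hi
    simp only [hIdef, Finset.mem_filter, Finset.mem_univ, true_and] at hi
    by_cases hij : S.g u i ∈ J
    · have := (habs i).1
      have := neg_abs_le (a i)
      simp only [hrdef, hij, if_pos]
      linarith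
    · rcases hi with hij' | hai
      · exact absurd hij' hij
      · have := hsgn i hij
        simp only [hrdef, hij, if_neg, not_false_iff, add_zero]
        omega
  have hpos' : ∀ i ∈ I', 0 < r' i := by
    intro i hi
    simp only [hI'def, Finset.mem_filter, Finset.mem_univ, true_and] at hi
    by_cases hij : S.g u' i ∈ J
    · have := (habs i).2
      have := neg_abs_le (b i)
      simp only [hr'def, hij, if_pos]
      linarith
    · rcases hi with hij' | hbi
      · exact absurd hij' hij
      · have := hsgn' i hij
        simp only [hr'def, hij, if_neg, not_false_iff, add_zero]
        omega
  have hexp : ∀ (w : T) (c : Fin n → ℤ),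
      ∑ i ∈ Finset.univ.filter (fun i => S.g w i ∈ J ∨ c i ≠ 0),
          (c i + if S.g w i ∈ J then N else 0) • S.g w i
        = (∑ i, c i • S.g w i) +
          N • ∑ i ∈ Finset.univ.filter (fun i => S.g w i ∈ J), S.g w i := by
    intro w c
    have e1 : ∑ i ∈ Finset.univ.filter (fun i => S.g w i ∈ J ∨ c i ≠ 0),
        (c i + if S.g w i ∈ J then N else 0) • S.g w i
        = ∑ i, (c i + if S.g w i ∈ J then N else 0) • S.g w i := by
      refine Finset.sum_subset (Finset.subset_univ _) ?_
      intro i _ hi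
      simp only [Finset.mem_filter, Finset.mem_univ, true_and, not_or, not_not] at hi
      rw [if_neg hi.1, hi.2]
      simp
    rw [e1]
    calc ∑ i, (c i + if S.g w i ∈ J then N else 0) • S.g w i
        = ∑ i, (c i • S.g w i + if S.g w i ∈ J then N • S.g w i else 0) := by
          refine Finset.sum_congr rfl fun i _ => ?_
          by_cases h : S.g w i ∈ J <;> simp [h, add_smul]
      _ = (∑ i, c i • S.g w i) + ∑ i, (if S.g w i ∈ J then N • S.g w i else 0) :=
          Finset.sum_add_distrib
      _ = (∑ i, c i • S.g w i) +
          N • ∑ i ∈ Finset.univ.filter (fun i => S.g w i ∈ J), S.g w i := by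
          rw [← Finset.sum_filter, Finset.smul_sum]
  have hsum : ∑ i ∈ I, r i • S.g u i = ∑ j ∈ I', r' j • S.g u' j := by
    rw [hIdef, hI'def, hrdef, hr'def, hexp u a, hexp u' b, ← ha, ← hb,
      S.sum_filter_mem u hu.1 hJfin, S.sum_filter_mem u' hu'.1 hJfin]
  obtain ⟨σ, hbij, hmatch⟩ := S.uniqueness u u' I I' r r' hpos hpos' hsum
  intro i hai hiJ
  have hiI : i ∈ (I : Set (Fin n)) := by
    simp only [hIdef, Finset.coe_filter, Set.mem_setOf_eq, Finset.mem_univ, true_and]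
    exact Or.inr hai
  obtain ⟨j, hjI', hji⟩ := hbij.surjOn hiI
  have hjI'' : j ∈ I' := hjI'
  refine ⟨j, ?_⟩
  rw [(hmatch j hjI'').2, hji]

/-- Core lemma: if `u`, `u'` are co-Bongartz completions of `J` with respect to `s`, `s'`,
and `E` indexes vectors of `G_s` lying in `G_{s'}`, then there is a set of at least
`E.card` indices of basis vectors of `u` which all belong to `G_{u'}` and which contains
all indices of vectors of `J`. -/
lemma core {J : Set (Fin n → ℤ)} {s s' u u' : T}
    (hu : S.IsCoB J s u) (hu' : S.IsCoB J s' u')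
    (E : Finset (Fin n)) (hE : ∀ i ∈ E, S.g s i ∈ Set.range (S.g s')) :
    ∃ Sf : Finset (Fin n), E.card ≤ Sf.card ∧
      (∀ i ∈ Sf, S.g u i ∈ Set.range (S.g u')) ∧
      ∀ i, S.g u i ∈ J → i ∈ Sf := by
  classical
  set B := S.basis u with hB
  set Sf : Finset (Fin n) := Finset.univ.filter
    (fun i => S.g u i ∈ J ∨ ∃ j ∈ E, B.repr (S.g s j) i ≠ 0) with hSf
  have hzero : ∀ (j : Fin n), j ∈ E → ∀ i, i ∉ Sf → B.repr (S.g s j) i = 0 := by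
    intro j hj i hi
    by_contra hne
    apply hi
    simp only [hSf, Finset.mem_filter, Finset.mem_univ, true_and]
    exact Or.inr ⟨j, hj, hne⟩
  refine ⟨Sf, ?_, ?_, ?_⟩
  · -- cardinality bound via linear independence
    have hindep : LinearIndependent ℤ (fun j : ↥E => S.g s j) :=
      (S.indep s).comp _ Subtype.val_injective
    have hspan : Set.range (fun j : ↥E => S.g s j)
        ≤ Submodule.span ℤ ((Sf.image (S.g u) : Finset (Fin n → ℤ)) : Set (Fin n → ℤ)) := by
      rintro _ ⟨j, rfl⟩
      have expand : S.g s (j : Fin n) = ∑ i ∈ Sf, B.repr (S.g s j) i • S.g u i := by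
        conv_lhs => rw [← S.sum_repr u (S.g s j)]
        refine (Finset.sum_subset (Finset.subset_univ _) ?_).symm
        intro i _ hi
        rw [hzero j j.2 i hi, zero_smul]
      show S.g s (j : Fin n) ∈ _
      rw [expand]
      refine Submodule.sum_mem _ fun i hi => Submodule.smul_mem _ _
        (Submodule.subset_span ?_)
      rw [Finset.coe_image]
      exact Set.mem_image_of_mem _ (Finset.mem_coe.2 hi)
    have hcard := linearIndependent_le_span' _ hindep _ hspan
    rw [Cardinal.mk_fintype, Fintype.card_coe] at hcard
    have hcard2 : Fintype.card ((Sf.image (S.g u) : Finset (Fin n → ℤ)) : Set (Fin n → ℤ))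
        = (Sf.image (S.g u)).card := by
      simp [Fintype.card_coe]
    rw [hcard2] at hcard
    have := Nat.cast_le.1 hcard
    calc E.card ≤ (Sf.image (S.g u)).card := this
      _ ≤ Sf.card := Finset.card_image_le
  · intro i hi
    simp only [hSf, Finset.mem_filter, Finset.mem_univ, true_and] at hi
    rcases hi with hiJ | ⟨j, hj, hne⟩
    · exact hu'.1 hiJ
    · by_cases hiJ : S.g u i ∈ J
      · exact hu'.1 hiJ
      · exact S.claim hu hu' ⟨j, rfl⟩ (hE j hj)
          (S.sum_repr u (S.g s j)).symm
          (S.sum_repr u' (S.g s j)).symm i hne hiJ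
  · intro i hi
    simp only [hSf, Finset.mem_filter, Finset.mem_univ, true_and]
    exact Or.inl hi

/-- Comparison lemma (essentially Theorem 5.2.1): if `u`, `u'` are co-Bongartz
completions of `J` with respect to `s`, `s'` and `G_s`, `G_{s'}` share at least
`n - 1` vectors indexed by `E`, then `G_u = G_{u'}` as sets, or `G_{u'}` is a
mutation of `G_u` at a vector not in `J`. -/
lemma compare {J : Set (Fin n → ℤ)} {s s' u u' : T}
    (hu : S.IsCoB J s u) (hu' : S.IsCoB J s' u')
    (E : Finset (Fin n)) (hEcard : n - 1 ≤ E.card)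
    (hE : ∀ i ∈ E, S.g s i ∈ Set.range (S.g s')) :
    Set.range (S.g u) = Set.range (S.g u') ∨
      ∃ k', S.IsMutationAt u u' k' ∧ S.g u k' ∉ J := by
  classical
  obtain ⟨Sf, hc, hsub, hJsub⟩ := S.core hu hu' E hE
  by_cases hUU : Set.range (S.g u) ⊆ Set.range (S.g u')
  · exact Or.inl (S.range_eq_of_subset hUU)
  · right
    obtain ⟨z, hz, hz'⟩ := Set.not_subset.1 hUU
    obtain ⟨k', hk'⟩ := hz
    refine ⟨k', ?_, ?_⟩
    · -- A = g u '' Sf equals range g u \ {z}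
      have hzA : ∀ i ∈ Sf, S.g u i ≠ z := by
        intro i hi h
        exact hz' (h ▸ hsub i hi)
      have hAsub : S.g u '' (Sf : Set (Fin n)) ⊆ Set.range (S.g u) \ {z} := by
        rintro _ ⟨i, hi, rfl⟩
        exact ⟨⟨i, rfl⟩, hzA i hi⟩
      have hAcard : (S.g u '' (Sf : Set (Fin n))).ncard = Sf.card := by
        rw [Set.ncard_image_of_injective _ (S.g_injective u), Set.ncard_coe_finset]
      have hDcard : (Set.range (S.g u) \ {z}).ncard = n - 1 := by
        rw [Set.ncard_diff_singleton_of_mem (hk' ▸ Set.mem_range_self k' : z ∈ Set.range (S.g u))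
          , S.ncard_range]
      have hAeq : S.g u '' (Sf : Set (Fin n)) = Set.range (S.g u) \ {z} := by
        refine Set.eq_of_subset_of_ncard_le hAsub ?_
          (((Set.finite_range (S.g u)).subset Set.diff_subset))
        rw [hAcard, hDcard]
        omega
      -- now prove the mutation identity
      unfold IsMutationAt
      rw [hk']
      apply Set.eq_of_subset_of_subset
      · rintro x ⟨hx1, hx2⟩
        refine ⟨hx1, ?_⟩
        intro hxz
        rw [Set.mem_singleton_iff] at hxz
        exact hz' (hxz ▸ hx2)
      · intro x hx
        rw [← hAeq] at hx
        obtain ⟨i, hi, rfl⟩ := hx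
        exact ⟨⟨i, rfl⟩, hsub i hi⟩
    · intro hzJ
      exact hz' (hk' ▸ hsub k' (hJsub k' hzJ))

lemma isCoB_congr {J : Set (Fin n → ℤ)} {s s' u' : T}
    (h : Set.range (S.g s) = Set.range (S.g s')) (hu' : S.IsCoB J s' u') :
    S.IsCoB J s u' := by
  refine ⟨hu'.1, fun k r hr i hi => ?_⟩
  have : S.g s k ∈ Set.range (S.g s') := h ▸ Set.mem_range_self k
  obtain ⟨k₂, hk₂⟩ := this
  exact hu'.2 k₂ r (hk₂.trans hr) i hi

lemma range_eq_of_isCoB {J : Set (Fin n → ℤ)} {s u u' : T}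
    (hu : S.IsCoB J s u) (hu' : S.IsCoB J s u') :
    Set.range (S.g u) = Set.range (S.g u') := by
  classical
  obtain ⟨Sf, hc, hsub, _⟩ := S.core hu hu' Finset.univ (fun i _ => Set.mem_range_self i)
  rw [Finset.card_univ, Fintype.card_fin] at hc
  have hSf : Sf = Finset.univ := Finset.eq_univ_of_card _
    (le_antisymm (by simpa using Finset.card_le_univ Sf) (by simpa using hc))
  apply S.range_eq_of_subset
  rintro _ ⟨i, rfl⟩
  exact hsub i (hSf ▸ Finset.mem_univ i)

end GSystem

/-- Theorem 5.2.3: if `G_t` is reachable from the initial basis `G_{t₀}` by a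
finite sequence of mutations, then there is a sequence of mutations from
`G_{t₀}` to `G_t` which never mutates at a vector of `J = G_t ∩ G_{t₀}`. -/
theorem stmt8 {n : ℕ} {T : Type} {t₀ : T} (S : GSystem n T t₀) (t : T)
    (hreach : Relation.ReflTransGen S.Step t₀ t) :
    ∃ (m : ℕ) (u : Fin (m + 1) → T) (k : Fin m → Fin n),
      u 0 = t₀ ∧
      Set.range (S.g (u (Fin.last m))) = Set.range (S.g t) ∧
      ∀ i : Fin m, S.IsMutationAt (u i.castSucc) (u i.succ) (k i) ∧
        S.g (u i.castSucc) (k i) ∉ Set.range (S.g t) ∩ Set.range (S.g t₀) := by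
  classical
  set J : Set (Fin n → ℤ) := Set.range (S.g t) ∩ Set.range (S.g t₀) with hJdef
  have hJ0 : J ⊆ Set.range (S.g t₀) := Set.inter_subset_right
  choose TJ h1 h2 using fun s => S.coBongartz s J hJ0
  have hTJ : ∀ s, S.IsCoB J s (TJ s) := fun s => ⟨h1 s, h2 s⟩
  have key : ∀ s s', S.Step s s' →
      Set.range (S.g (TJ s)) = Set.range (S.g (TJ s')) ∨
      ∃ k', S.IsMutationAt (TJ s) (TJ s') k' ∧ S.g (TJ s) k' ∉ J := by
    intro s s' hstep
    rcases hstep with heq | ⟨k, hmut⟩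
    · exact Or.inl (S.range_eq_of_isCoB (hTJ s) (S.isCoB_congr heq (hTJ s')))
    · refine S.compare (hTJ s) (hTJ s') (Finset.univ.erase k) ?_ ?_
      · rw [Finset.card_erase_of_mem (Finset.mem_univ k), Finset.card_univ,
          Fintype.card_fin]
      · intro i hi
        have hik : i ≠ k := (Finset.mem_erase.1 hi).1
        have : S.g s i ∈ Set.range (S.g s) ∩ Set.range (S.g s') := by
          rw [hmut]
          exact ⟨Set.mem_range_self i, fun h => hik (S.g_injective s h)⟩
        exact this.2
  have hend : ∀ s, J ⊆ Set.range (S.g s) →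
      Set.range (S.g (TJ s)) = Set.range (S.g s) :=
    fun s hs => S.range_eq_of_isCoB (hTJ s) (S.isCoB_self hs)
  have h0 : Set.range (S.g (TJ t₀)) = Set.range (S.g t₀) := hend t₀ hJ0
  have ht : Set.range (S.g (TJ t)) = Set.range (S.g t) :=
    hend t Set.inter_subset_left
  suffices H : ∀ s, Relation.ReflTransGen S.Step t₀ s →
      ∃ (m : ℕ) (u : Fin (m + 1) → T) (k : Fin m → Fin n),
        u 0 = t₀ ∧
        Set.range (S.g (u (Fin.last m))) = Set.range (S.g (TJ s)) ∧
        ∀ i : Fin m, S.IsMutationAt (u i.castSucc) (u i.succ) (k i) ∧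
          S.g (u i.castSucc) (k i) ∉ J by
    obtain ⟨m, u, k, h01, hlast, hsteps⟩ := H t hreach
    exact ⟨m, u, k, h01, hlast.trans ht, hsteps⟩
  intro s hs
  induction hs with
  | refl =>
      exact ⟨0, fun _ => t₀, Fin.elim0, rfl, h0.symm, fun i => i.elim0⟩
  | @tail b c hab hbc ih =>
      obtain ⟨m, u, k, h01, hlast, hsteps⟩ := ih
      rcases key b c hbc with heq | ⟨k', hmut, hkJ⟩
      · exact ⟨m, u, k, h01, hlast.trans heq, hsteps⟩
      · have hvec : S.g (TJ b) k' ∈ Set.range (S.g (u (Fin.last m))) := by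
          rw [hlast]; exact Set.mem_range_self k'
        obtain ⟨k'', hk''⟩ := hvec
        refine ⟨m + 1, Fin.snoc u (TJ c), Fin.snoc k k'', ?_, ?_, ?_⟩
        · have h00 : (0 : Fin (m + 2)) = Fin.castSucc 0 := rfl
          rw [h00, Fin.snoc_castSucc]
          exact h01
        · rw [Fin.snoc_last]
        · intro i
          refine Fin.lastCases ?_ (fun j => ?_) i
          · constructor
            · have hm : S.IsMutationAt (u (Fin.last m)) (TJ c) k'' := by
                unfold GSystem.IsMutationAt
                rw [hlast, hk'']
                exact hmut
              simpa only [Fin.succ_last, Fin.snoc_castSucc, Fin.snoc_last] using hm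
            · simpa only [Fin.snoc_castSucc, Fin.snoc_last, hk''] using hkJ
          · constructor
            · simpa only [Fin.succ_castSucc, Fin.snoc_castSucc] using (hsteps j).1
            · simpa only [Fin.snoc_castSucc] using (hsteps j).2
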